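/- With thresholds and constants as in Algorithm 2, for any m ∈ {1,...,L}, any p > T_m and any integer z with 0 ≤ z < m: p·α_m + (1−p)·α_{-m} > p·α_z + (1−p)·α_{-z}. Symmetrically, for any m ∈ {0,...,L−1}, any p < T_{m+1} and any z with m < z ≤ L: p·α_m + (1−p)·α_{-m} > p·α_z + (1−p)·α_{-z}. -/

import Mathlib

/-- The pair (α_{L−k}, α_{−(L−k)}) of constants of Algorithm 2, computed by downward
recursion from level L. -/
noncomputable def alphaPair (L : ℕ) (S T : ℕ → ℝ) : ℕ → ℝ × ℝ
  | 0 => (1 / S L, 0)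
  | k + 1 =>
      let p := alphaPair L S T k
      let l := L - (k + 1)
      let a := ((1 - S l) * T (l + 1) * p.1 + (1 - S l) * (1 - T (l + 1)) * p.2
                  - (1 - T (l + 1))) / (T (l + 1) - S l)
      (a, (1 - S l * a) / (1 - S l))

/-- The constants α_z, z ∈ {−L,…,L}, of Algorithm 2 (α_0 = 1). -/
noncomputable def alphaC (L : ℕ) (S T : ℕ → ℝ) (z : ℤ) : ℝ :=
  if z = 0 then 1
  else if 0 < z then (alphaPair L S T (L - z.toNat)).1
  else (alphaPair L S T (L - (-z).toNat)).2

private lemma alphaPair_succ_fst (L : ℕ) (S T : ℕ → ℝ) (k : ℕ) :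
    (alphaPair L S T (k+1)).1 = ((1 - S (L-(k+1))) * T (L-(k+1)+1) * (alphaPair L S T k).1
      + (1 - S (L-(k+1))) * (1 - T (L-(k+1)+1)) * (alphaPair L S T k).2
      - (1 - T (L-(k+1)+1))) / (T (L-(k+1)+1) - S (L-(k+1))) := rfl

private lemma alphaPair_succ_snd (L : ℕ) (S T : ℕ → ℝ) (k : ℕ) :
    (alphaPair L S T (k+1)).2
      = (1 - S (L-(k+1)) * (alphaPair L S T (k+1)).1) / (1 - S (L-(k+1))) := rfl

private lemma mono_chain (f : ℕ → ℝ) (L : ℕ)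
    (h : ∀ l, 1 ≤ l → l < L → f l < f (l + 1)) :
    ∀ i j, 1 ≤ i → i ≤ j → j ≤ L → f i ≤ f j := by
  intro i j hi hij
  induction j, hij using Nat.le_induction with
  | base => intro _; exact le_rfl
  | succ n hn ih =>
    intro hnL
    have h1 : f i ≤ f n := ih (by omega)
    have h2 : f n < f (n + 1) := h n (by omega) (by omega)
    linarith

private lemma core_real (Sl S' T' a b a' b' : ℝ)
    (h1 : 0 < Sl) (h2 : Sl < S') (h3 : S' < T') (h4 : T' < 1)
    (ha : 1 < a) (hb0 : 0 ≤ b) (hb1 : b < 1)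
    (hbud : S' * a + (1 - S') * b = 1)
    (ha'def : a' = ((1 - Sl) * T' * a + (1 - Sl) * (1 - T') * b - (1 - T')) / (T' - Sl))
    (hb'def : b' = (1 - Sl * a') / (1 - Sl)) :
    1 < a' ∧ a' < a ∧ b < b' ∧ b' < 1 ∧ 0 ≤ b' ∧
      Sl * a' + (1 - Sl) * b' = 1 ∧
      T' * a' + (1 - T') * b' = T' * a + (1 - T') * b := by
  have hd1 : 0 < T' - Sl := by linarith
  have hd2 : 0 < 1 - Sl := by linarith
  have hT'pos : 0 < T' := by linarith
  have hv : T' * a + (1 - T') * b - 1 = (T' - S') * (a - b) := by linear_combination hbud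
  have hv1 : 0 < T' * a + (1 - T') * b - 1 := by
    rw [hv]; exact mul_pos (by linarith) (by linarith)
  have hw : 1 - Sl * a - (1 - Sl) * b = (S' - Sl) * (a - b) := by linear_combination -hbud
  have hw1 : 0 < 1 - Sl * a - (1 - Sl) * b := by
    rw [hw]; exact mul_pos (by linarith) (by linarith)
  have ha'1 : 1 < a' := by
    rw [ha'def, lt_div_iff₀ hd1]
    nlinarith [mul_pos hd2 hv1]
  have ha'a : a' < a := by
    rw [ha'def, div_lt_iff₀ hd1]
    nlinarith [mul_pos (show (0:ℝ) < 1 - T' by linarith) hw1]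
  have hbud' : Sl * a' + (1 - Sl) * b' = 1 := by
    rw [hb'def]; field_simp; ring
  have hcross : T' * a' + (1 - T') * b' = T' * a + (1 - T') * b := by
    rw [hb'def, ha'def]; field_simp; ring
  have hbb' : b < b' := by
    have h6 : (1 - T') * (b' - b) = T' * (a - a') := by linear_combination hcross
    nlinarith [h6, mul_pos hT'pos (show (0:ℝ) < a - a' by linarith)]
  have hb'1 : b' < 1 := by
    rw [hb'def, div_lt_one hd2]
    nlinarith [mul_pos h1 (show (0:ℝ) < a' - 1 by linarith)]
  exact ⟨ha'1, ha'a, hbb', hb'1, by linarith, hbud', hcross⟩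

/-- Lemma 5: the correct confidence level uniquely maximizes the per-question
expected score p·α_m + (1−p)·α_{−m}. -/
theorem alpha_level_optimal
    (L : ℕ) (hL : 1 ≤ L) (S T : ℕ → ℝ)
    (hS0 : 0 < S 1) (hSmono : ∀ l : ℕ, 1 ≤ l → l < L → S l < S (l + 1)) (hSL : S L < 1)
    (hT0 : 0 < T 1) (hTmono : ∀ l : ℕ, 1 ≤ l → l < L → T l < T (l + 1)) (hTL : T L < 1)
    (hTS1 : T 1 = S 1) (hTS : ∀ l : ℕ, 2 ≤ l → l ≤ L → S l < T l) :
    (∀ m : ℕ, 1 ≤ m → m ≤ L → ∀ p : ℝ, T m < p → ∀ z : ℕ, z < m →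
      p * alphaC L S T z + (1 - p) * alphaC L S T (-(z : ℤ))
        < p * alphaC L S T m + (1 - p) * alphaC L S T (-(m : ℤ))) ∧
    (∀ m : ℕ, m ≤ L - 1 → ∀ p : ℝ, p < T (m + 1) → ∀ z : ℕ, m < z → z ≤ L →
      p * alphaC L S T z + (1 - p) * alphaC L S T (-(z : ℤ))
        < p * alphaC L S T m + (1 - p) * alphaC L S T (-(m : ℤ))) := by
  have SmonoLe : ∀ i j, 1 ≤ i → i ≤ j → j ≤ L → S i ≤ S j := mono_chain S L hSmono
  have TmonoLe : ∀ i j, 1 ≤ i → i ≤ j → j ≤ L → T i ≤ T j := mono_chain T L hTmono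
  have hSpos : ∀ l, 1 ≤ l → l ≤ L → 0 < S l := fun l h1 h2 =>
    lt_of_lt_of_le hS0 (SmonoLe 1 l le_rfl h1 h2)
  have hSlt1 : ∀ l, 1 ≤ l → l ≤ L → S l < 1 := fun l h1 h2 =>
    lt_of_le_of_lt (SmonoLe l L h1 h2 le_rfl) hSL
  have hTlt1 : ∀ l, 1 ≤ l → l ≤ L → T l < 1 := fun l h1 h2 =>
    lt_of_le_of_lt (TmonoLe l L h1 h2 le_rfl) hTL
  -- Bundle invariant for levels l = L - k ≥ 1
  have HB : ∀ k, k + 1 ≤ L →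
      1 < (alphaPair L S T k).1 ∧ 0 ≤ (alphaPair L S T k).2 ∧ (alphaPair L S T k).2 < 1 ∧
      S (L - k) * (alphaPair L S T k).1 + (1 - S (L - k)) * (alphaPair L S T k).2 = 1 := by
    intro k
    induction k with
    | zero =>
      intro _
      have hSLpos : 0 < S L := hSpos L hL le_rfl
      have h0 : alphaPair L S T 0 = (1 / S L, 0) := rfl
      rw [h0]
      refine ⟨one_lt_one_div hSLpos hSL, le_rfl, one_pos, ?_⟩
      simp only [Nat.sub_zero]
      field_simp
      ring
    | succ k ih =>
      intro hk2
      obtain ⟨ha, hb0, hb1, hbud⟩ := ih (by omega)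
      have e1 : L - (k + 1) + 1 = L - k := by omega
      have hSl : 0 < S (L - (k + 1)) := hSpos _ (by omega) (by omega)
      have hSlS' : S (L - (k + 1)) < S (L - k) := by
        rw [← e1]; exact hSmono (L - (k + 1)) (by omega) (by omega)
      have hS'T' : S (L - k) < T (L - k) := hTS (L - k) (by omega) (by omega)
      have hT'1 : T (L - k) < 1 := hTlt1 (L - k) (by omega) (by omega)
      have hfst := alphaPair_succ_fst L S T k
      have hsnd := alphaPair_succ_snd L S T k
      rw [e1] at hfst
      obtain ⟨c1, c2, c3, c4, c5, c6, c7⟩ := core_real (S (L - (k+1))) (S (L - k)) (T (L - k))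
        (alphaPair L S T k).1 (alphaPair L S T k).2
        (alphaPair L S T (k+1)).1 (alphaPair L S T (k+1)).2
        hSl hSlS' hS'T' hT'1 ha hb0 hb1 hbud hfst hsnd
      exact ⟨c1, c5, c4, c6⟩
  -- Cross/comparison between adjacent levels l and l+1, both ≥ 1
  have HC : ∀ l, 1 ≤ l → l < L →
      (T (l+1) * (alphaPair L S T (L - (l+1))).1 + (1 - T (l+1)) * (alphaPair L S T (L - (l+1))).2
        = T (l+1) * (alphaPair L S T (L - l)).1 + (1 - T (l+1)) * (alphaPair L S T (L - l)).2) ∧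
      (alphaPair L S T (L - l)).1 < (alphaPair L S T (L - (l+1))).1 ∧
      (alphaPair L S T (L - (l+1))).2 < (alphaPair L S T (L - l)).2 := by
    intro l hl1 hlL
    set k := L - (l + 1) with hk
    have ek1 : L - (k + 1) = l := by omega
    have ek2 : L - k = l + 1 := by omega
    have ek3 : L - l = k + 1 := by omega
    obtain ⟨ha, hb0, hb1, hbud⟩ := HB k (by omega)
    rw [ek2] at hbud
    have hSl : 0 < S l := hSpos _ hl1 (by omega)
    have hSlS' : S l < S (l + 1) := hSmono l hl1 hlL
    have hS'T' : S (l + 1) < T (l + 1) := hTS (l + 1) (by omega) (by omega)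
    have hT'1 : T (l + 1) < 1 := hTlt1 (l + 1) (by omega) (by omega)
    have hfst := alphaPair_succ_fst L S T k
    have hsnd := alphaPair_succ_snd L S T k
    rw [ek1] at hfst hsnd
    rw [ek3]
    obtain ⟨c1, c2, c3, c4, c5, c6, c7⟩ := core_real (S l) (S (l+1)) (T (l+1))
      (alphaPair L S T k).1 (alphaPair L S T k).2
      (alphaPair L S T (k+1)).1 (alphaPair L S T (k+1)).2
      hSl hSlS' hS'T' hT'1 ha hb0 hb1 hbud hfst hsnd
    exact ⟨c7.symm, c2, c3⟩
  -- translation to alphaC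
  have hA : ∀ l : ℕ, 1 ≤ l → alphaC L S T (l : ℤ) = (alphaPair L S T (L - l)).1 := by
    intro l hl
    have h0 : (l : ℤ) ≠ 0 := by exact_mod_cast Nat.one_le_iff_ne_zero.mp hl
    have h1 : (0 : ℤ) < (l : ℤ) := by exact_mod_cast hl
    simp [alphaC, h0, h1, show l ≠ 0 by omega, show 0 < l by omega]
  have hBn : ∀ l : ℕ, 1 ≤ l → alphaC L S T (-(l : ℤ)) = (alphaPair L S T (L - l)).2 := by
    intro l hl
    have h0 : -(l : ℤ) ≠ 0 := by simp; omega
    have h1 : ¬ (0 : ℤ) < -(l : ℤ) := by simp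
    simp [alphaC, h0, h1]
  have hA0 : alphaC L S T ((0 : ℕ) : ℤ) = 1 := by simp [alphaC]
  have hB0 : alphaC L S T (-((0 : ℕ) : ℤ)) = 1 := by simp [alphaC]
  -- slope increments
  set d : ℕ → ℝ := fun l => alphaC L S T ((l + 1 : ℕ) : ℤ) - alphaC L S T (-((l + 1 : ℕ) : ℤ))
      - alphaC L S T ((l : ℕ) : ℤ) + alphaC L S T (-((l : ℕ) : ℤ)) with hd
  have dpos : ∀ l, l < L → 0 < d l := by
    intro l hlL
    have hpr := HB (L - (l + 1)) (by omega)
    have e : L - (L - (l + 1)) = l + 1 := by omega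
    show 0 < alphaC L S T ((l + 1 : ℕ) : ℤ) - alphaC L S T (-((l + 1 : ℕ) : ℤ))
        - alphaC L S T ((l : ℕ) : ℤ) + alphaC L S T (-((l : ℕ) : ℤ))
    rw [hA (l + 1) (by omega), hBn (l + 1) (by omega)]
    rcases Nat.eq_zero_or_pos l with h0 | h1
    · subst h0
      rw [hA0, hB0]
      obtain ⟨ha, _, hb1, _⟩ := hpr
      linarith
    · obtain ⟨_, hc2, hc3⟩ := HC l h1 hlL
      rw [hA l h1, hBn l h1]
      linarith
  -- crossing equalities
  have crossL : ∀ l, l < L →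
      T (l + 1) * alphaC L S T ((l + 1 : ℕ) : ℤ)
        + (1 - T (l + 1)) * alphaC L S T (-((l + 1 : ℕ) : ℤ))
      = T (l + 1) * alphaC L S T ((l : ℕ) : ℤ)
        + (1 - T (l + 1)) * alphaC L S T (-((l : ℕ) : ℤ)) := by
    intro l hlL
    rw [hA (l + 1) (by omega), hBn (l + 1) (by omega)]
    rcases Nat.eq_zero_or_pos l with h0 | h1
    · subst h0
      rw [hA0, hB0]
      obtain ⟨_, _, _, hbud⟩ := HB (L - (0 + 1)) (by omega)
      have e : L - (L - (0 + 1)) = 1 := by omega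
      rw [e] at hbud
      rw [show (0:ℕ) + 1 = 1 from rfl, hTS1]
      linarith
    · rw [hA l h1, hBn l h1]
      exact (HC l h1 hlL).1
  -- affine step formula
  set f : ℕ → ℝ → ℝ := fun l p => p * alphaC L S T ((l : ℕ) : ℤ)
      + (1 - p) * alphaC L S T (-((l : ℕ) : ℤ)) with hf
  have stepf : ∀ l, l < L → ∀ p : ℝ, f (l + 1) p - f l p = (p - T (l + 1)) * d l := by
    intro l hlL p
    have hc := crossL l hlL
    show p * alphaC L S T ((l + 1 : ℕ) : ℤ) + (1 - p) * alphaC L S T (-((l + 1 : ℕ) : ℤ))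
        - (p * alphaC L S T ((l : ℕ) : ℤ) + (1 - p) * alphaC L S T (-((l : ℕ) : ℤ)))
      = (p - T (l + 1)) * (alphaC L S T ((l + 1 : ℕ) : ℤ) - alphaC L S T (-((l + 1 : ℕ) : ℤ))
        - alphaC L S T ((l : ℕ) : ℤ) + alphaC L S T (-((l : ℕ) : ℤ)))
    linear_combination hc
  constructor
  · intro m hm1 hmL p hp z hz
    have key : ∀ j, z + 1 ≤ j → j ≤ m → f z p < f j p := by
      intro j hj1
      induction j, hj1 using Nat.le_induction with
      | base =>
        intro hjm
        have h := stepf z (by omega) p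
        have hT : T (z + 1) ≤ T m := TmonoLe (z + 1) m (by omega) (by omega) (by omega)
        linarith [h, mul_pos (show (0:ℝ) < p - T (z + 1) by linarith) (dpos z (by omega))]
      | succ n hn ih =>
        intro hnm
        have h1 := ih (by omega)
        have h := stepf n (by omega) p
        have hT : T (n + 1) ≤ T m := TmonoLe (n + 1) m (by omega) (by omega) hmL
        linarith [h, mul_pos (show (0:ℝ) < p - T (n + 1) by linarith) (dpos n (by omega))]
    exact key m (by omega) le_rfl
  · intro m hmL1 p hp z hz1 hz2
    have key : ∀ j, m + 1 ≤ j → j ≤ L → f j p < f m p := by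
      intro j hj1
      induction j, hj1 using Nat.le_induction with
      | base =>
        intro _
        have h := stepf m (by omega) p
        linarith [h, mul_neg_of_neg_of_pos (show p - T (m + 1) < 0 by linarith)
          (dpos m (by omega))]
      | succ n hn ih =>
        intro hnL
        have h1 := ih (by omega)
        have h := stepf n (by omega) p
        have hT : T (m + 1) ≤ T (n + 1) := TmonoLe (m + 1) (n + 1) (by omega) (by omega) hnL
        linarith [h, mul_neg_of_neg_of_pos (show p - T (n + 1) < 0 by linarith)
          (dpos n (by omega))]
    exact key z (by omega) hz2
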